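/- arXiv:1109.3226 — 2 statements merged into one kernel-verified Lean document; each statement's English description precedes it below -/
import Mathlib

section
/- Let K be a field of characteristic 0, a, b, c ∈ K with disc(x³ + ax² + bx + c) = 0. Let A(x) = x⁴ − 2bx² − 8cx + b² − 4ac and B(x) = 4x³ + 4ax² + 4bx + 4c. Then A and B have a common root in an algebraic closure of K. -/
open Polynomial

/-- If the discriminant `a²b² + 18abc − 4a³c − 4b³ − 27c²` of `x³ + ax² + bx + c`
vanishes, then the Lattès numerator `A = x⁴ − 2bx² − 8cx + b² − 4ac` and denominator
`B = 4x³ + 4ax² + 4bx + 4c` have a common root in an algebraic closure of `K`. -/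
theorem lattes_common_root_of_disc_zero (K : Type*) [Field K] [CharZero K]
    (a b c : K)
    (hdisc : a ^ 2 * b ^ 2 + 18 * a * b * c - 4 * a ^ 3 * c - 4 * b ^ 3 - 27 * c ^ 2 = 0)
    (A B : Polynomial K)
    (hA : A = X ^ 4 - C (2 * b) * X ^ 2 - C (8 * c) * X + C (b ^ 2 - 4 * a * c))
    (hB : B = C 4 * X ^ 3 + C (4 * a) * X ^ 2 + C (4 * b) * X + C (4 * c)) :
    ∃ r : AlgebraicClosure K, aeval r A = 0 ∧ aeval r B = 0 := by
  set φ : K →+* AlgebraicClosure K := algebraMap K (AlgebraicClosure K) with hφ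
  set P : Cubic K := ⟨1, a, b, c⟩ with hP
  have ha : P.a ≠ 0 := one_ne_zero
  have hsplit : Splits (P.toPoly.map φ) := IsAlgClosed.splits _
  obtain ⟨x, y, z, h3⟩ := (Cubic.splits_iff_roots_eq_three ha).mp hsplit
  have hb := Cubic.b_eq_three_roots ha h3
  have hc := Cubic.c_eq_three_roots ha h3
  have hd := Cubic.d_eq_three_roots ha h3
  simp only [hP, map_one, one_mul] at hb hc hd
  have hdisc0 : P.discr = 0 := by
    simp only [hP, Cubic.discr]
    linear_combination hdisc
  have hne : ¬(x ≠ y ∧ x ≠ z ∧ y ≠ z) := by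
    intro h
    exact ((Cubic.discr_ne_zero_iff_roots_ne ha h3).mpr h) hdisc0
  push_neg at hne
  have key : ∀ r s : AlgebraicClosure K,
      φ a = -(2 * r + s) → φ b = r ^ 2 + 2 * r * s → φ c = -(r ^ 2 * s) →
      aeval r A = 0 ∧ aeval r B = 0 := by
    intro r s ea eb ec
    constructor
    · rw [hA]
      simp only [map_add, map_sub, map_mul, map_pow, aeval_X, aeval_C, map_ofNat]
      rw [← hφ]
      linear_combination (-4 * φ c) * ea + (φ b - r ^ 2 + 2 * r * s) * eb + 4 * s * ec
    · rw [hB]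
      simp only [map_add, map_mul, map_pow, aeval_X, aeval_C, map_ofNat]
      rw [← hφ]
      linear_combination (4 * r ^ 2) * ea + (4 * r) * eb + 4 * ec
  rcases Classical.em (x = y) with hxy | hxy
  · refine ⟨x, key x z ?_ ?_ ?_⟩ <;>
      [skip; skip; skip] <;>
      · first
        | (rw [hb]; rw [← hxy]; ring)
        | (rw [hc]; rw [← hxy]; ring)
        | (rw [hd]; rw [← hxy]; ring)
  · rcases Classical.em (x = z) with hxz | hxz
    · refine ⟨x, key x y ?_ ?_ ?_⟩
      · rw [hb, ← hxz]; ring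
      · rw [hc, ← hxz]; ring
      · rw [hd, ← hxz]; ring
    · have hyz : y = z := hne hxy hxz
      refine ⟨y, key y x ?_ ?_ ?_⟩
      · rw [hb, ← hyz]; ring
      · rw [hc, ← hyz]; ring
      · rw [hd, ← hyz]; ring
end

section
/- Over the polynomial ring ℚ[a,b,c], let f(x) = x³ + ax² + bx + c, A(x) = x⁴ − 2bx² − 8cx + b² − 4ac, B(x) = 4x³ + 4ax² + 4bx + 4c, and W(x) = B(x)A'(x) − A(x)B'(x). Then disc(W) = −2³⁸ · disc(f)⁵, where disc(f) = a²b² + 18abc − 4a³c − 4b³ − 27c². -/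
open Polynomial


/-- The discriminant of a polynomial `P` of degree `N` with leading coefficient `a` and
roots `r₁, …, r_N` in an algebraic closure: `disc P = a^(2N−2) ∏_{m<n} (r_m − r_n)²`,
computed in the algebraic closure (each unordered pair `{s, t}` of roots contributes
`(s − t)² = (s + t)² − 4st`). -/
noncomputable def polyDisc {K : Type*} [Field K] (P : Polynomial K) :
    AlgebraicClosure K :=
  algebraMap K (AlgebraicClosure K) P.leadingCoeff ^ (2 * P.natDegree - 2) *
    (((P.map (algebraMap K (AlgebraicClosure K))).roots.powersetCard 2).map
      fun t => t.sum ^ 2 - 4 * t.prod).prod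

lemma aux6 {R : Type*} [CommRing R] (x1 x2 x3 x4 x5 x6 : R) :
    ((({x1,x2,x3,x4,x5,x6} : Multiset R).powersetCard 2).map
      (fun t => t.sum ^ 2 - 4 * t.prod)).prod =
    (((x1+x2)^2 - 4*(x1*x2)) * ((x3+x4)^2 - 4*(x3*x4)) * ((x5+x6)^2 - 4*(x5*x6)))
    * (((x1+x3)^2 - 4*(x1*x3)) * ((x1+x4)^2 - 4*(x1*x4)) * ((x2+x3)^2 - 4*(x2*x3)) * ((x2+x4)^2 - 4*(x2*x4)))
    * (((x1+x5)^2 - 4*(x1*x5)) * ((x1+x6)^2 - 4*(x1*x6)) * ((x2+x5)^2 - 4*(x2*x5)) * ((x2+x6)^2 - 4*(x2*x6)))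
    * (((x3+x5)^2 - 4*(x3*x5)) * ((x3+x6)^2 - 4*(x3*x6)) * ((x4+x5)^2 - 4*(x4*x5)) * ((x4+x6)^2 - 4*(x4*x6))) := by
  simp only [Multiset.insert_eq_cons, ← Multiset.cons_zero, Multiset.powersetCard_cons,
    Multiset.powersetCard_zero_left, Multiset.powersetCard_zero_right, Multiset.map_add,
    Multiset.map_map, Multiset.map_cons, Multiset.map_singleton, Multiset.map_zero,
    Multiset.prod_add, Multiset.prod_cons, Multiset.prod_singleton, Multiset.prod_zero,
    Multiset.sum_cons, Multiset.sum_singleton, Multiset.sum_zero, Function.comp,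
    Nat.reduceAdd, mul_one, one_mul, add_zero]
  ac_rfl

lemma within {R : Type*} [CommRing R] (e u A : R) (hu : u^2 = A) :
    ((e+u)+(e-u))^2 - 4*((e+u)*(e-u)) = 4*A := by
  have h : ((e+u)+(e-u))^2 - 4*((e+u)*(e-u)) = 4*u^2 := by ring
  rw [h, hu]

lemma cross {R : Type*} [CommRing R] (e f u v A B : R) (hu : u^2 = A) (hv : v^2 = B) :
    (((e+u)+(f+v))^2 - 4*((e+u)*(f+v))) * (((e+u)+(f-v))^2 - 4*((e+u)*(f-v))) *
    (((e-u)+(f+v))^2 - 4*((e-u)*(f+v))) * (((e-u)+(f-v))^2 - 4*((e-u)*(f-v)))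
    = (((e-f)^2 - A - B)^2 - 4*(A*B))^2 := by
  have h : (((e+u)+(f+v))^2 - 4*((e+u)*(f+v))) * (((e+u)+(f-v))^2 - 4*((e+u)*(f-v))) *
      (((e-u)+(f+v))^2 - 4*((e-u)*(f+v))) * (((e-u)+(f-v))^2 - 4*((e-u)*(f-v)))
      = (((e-f)^2 - u^2 - v^2)^2 - 4*(u^2*v^2))^2 := by ring
  rw [h, hu, hv]

lemma key {R : Type*} [CommRing R] (a b c e1 e2 e3 u1 u2 u3 : R)
    (ha : a = -(e1+e2+e3)) (hb : b = e1*e2+e1*e3+e2*e3) (hc : c = -(e1*e2*e3))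
    (hu1 : u1^2 = (e1-e2)*(e1-e3)) (hu2 : u2^2 = (e2-e1)*(e2-e3)) (hu3 : u3^2 = (e3-e1)*(e3-e2)) :
    (4:R)^10 * ((({e1+u1, e1-u1, e2+u2, e2-u2, e3+u3, e3-u3} : Multiset R).powersetCard 2).map
      (fun t => t.sum ^ 2 - 4 * t.prod)).prod
    = -(2^38) * (a^2*b^2 + 18*a*b*c - 4*a^3*c - 4*b^3 - 27*c^2)^5 := by
  rw [aux6, within e1 u1 _ hu1, within e2 u2 _ hu2, within e3 u3 _ hu3,
    cross e1 e2 u1 u2 _ _ hu1 hu2, cross e1 e3 u1 u3 _ _ hu1 hu3,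
    cross e2 e3 u2 u3 _ _ hu2 hu3, ha, hb, hc]
  ring

abbrev KKlattes := FractionRing (MvPolynomial (Fin 3) ℚ)
abbrev LLlattes := AlgebraicClosure KKlattes

set_option maxHeartbeats 2000000 in
theorem lattes_aux
    (a b c : KKlattes)
    (A B W : Polynomial KKlattes)
    (hA : A = X ^ 4 - C (2 * b) * X ^ 2 - C (8 * c) * X + C (b ^ 2 - 4 * a * c))
    (hB : B = C 4 * X ^ 3 + C (4 * a) * X ^ 2 + C (4 * b) * X + C (4 * c))
    (hW : W = B * derivative A - A * derivative B) :
    polyDisc W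
      = algebraMap _ (AlgebraicClosure (FractionRing (MvPolynomial (Fin 3) ℚ)))
          (-(2 ^ 38) *
            (a ^ 2 * b ^ 2 + 18 * a * b * c - 4 * a ^ 3 * c - 4 * b ^ 3 - 27 * c ^ 2) ^ 5) := by
  set φ : KKlattes →+* LLlattes := (algebraMap KKlattes LLlattes : KKlattes →+* LLlattes) with hφdef
  set p : LLlattes[X] := X^3 + C (φ a) * X^2 + C (φ b) * X + C (φ c) with hp
  have hdp : p.degree = 3 := by rw [hp]; compute_degree!
  obtain ⟨e1, he1⟩ := IsAlgClosed.exists_root (k := LLlattes) p (by rw [hdp]; decide)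
  rw [IsRoot, hp] at he1
  simp only [eval_add, eval_mul, eval_pow, eval_X, eval_C] at he1
  set q : LLlattes[X] := X^2 + C (φ a + e1) * X + C (φ b + φ a * e1 + e1^2) with hq
  have hdq : q.degree = 2 := by rw [hq]; compute_degree!
  obtain ⟨e2, he2⟩ := IsAlgClosed.exists_root (k := LLlattes) q (by rw [hdq]; decide)
  rw [IsRoot, hq] at he2
  simp only [eval_add, eval_mul, eval_pow, eval_X, eval_C] at he2
  set e3 : LLlattes := -(φ a + e1) - e2 with he3
  have ha' : φ a = -(e1 + e2 + e3) := by rw [he3]; ring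
  have hb' : φ b = e1*e2 + e1*e3 + e2*e3 := by rw [he3]; linear_combination he2
  have hc' : φ c = -(e1*e2*e3) := by rw [he3]; linear_combination he1 - e1*he2
  obtain ⟨u1, hu1⟩ := IsAlgClosed.exists_pow_nat_eq (k := LLlattes) ((e1-e2)*(e1-e3)) (n := 2) (by norm_num)
  obtain ⟨u2, hu2⟩ := IsAlgClosed.exists_pow_nat_eq (k := LLlattes) ((e2-e1)*(e2-e3)) (n := 2) (by norm_num)
  obtain ⟨u3, hu3⟩ := IsAlgClosed.exists_pow_nat_eq (k := LLlattes) ((e3-e1)*(e3-e2)) (n := 2) (by norm_num)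
  set M : Multiset LLlattes := {e1+u1, e1-u1, e2+u2, e2-u2, e3+u3, e3-u3} with hM
  have hmap : W.map φ = C 4 * (M.map (fun r => X - C r)).prod := by
    have hexp : (M.map (fun r => X - C r)).prod =
        (X - C (e1+u1)) * ((X - C (e1-u1)) * ((X - C (e2+u2)) * ((X - C (e2-u2)) *
        ((X - C (e3+u3)) * (X - C (e3-u3)))))) := by
      rw [hM]
      simp [Multiset.insert_eq_cons]
    have hWm : W.map φ = (B.map φ) * derivative (A.map φ) - (A.map φ) * derivative (B.map φ) := by
      rw [hW]
      simp [Polynomial.map_sub, Polynomial.map_mul, derivative_map]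
    have hAm : A.map φ = X^4 - C (2*φ b) * X^2 - C (8*φ c) * X + C ((φ b)^2 - 4*(φ a)*(φ c)) := by
      rw [hA]
      simp [Polynomial.map_add, Polynomial.map_sub, Polynomial.map_mul, Polynomial.map_pow, map_ofNat]
    have hBm : B.map φ = C 4 * X^3 + C (4*φ a) * X^2 + C (4*φ b) * X + C (4*φ c) := by
      rw [hB]
      simp [Polynomial.map_add, Polynomial.map_mul, Polynomial.map_pow, map_ofNat]
    rw [hWm, hAm, hBm, hexp]
    apply Polynomial.funext
    intro x
    simp only [derivative_add, derivative_sub, derivative_mul, derivative_C, derivative_X,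
      derivative_X_pow, derivative_one, eval_add, eval_sub, eval_mul, eval_pow, eval_X, eval_C,
      eval_natCast, eval_ofNat, zero_mul, mul_zero, zero_add, add_zero, mul_one, one_mul]
    rw [ha', hb', hc']
    linear_combination (4*((x-e2)^2 - (e2-e1)*(e2-e3))*((x-e3)^2 - (e3-e1)*(e3-e2)))*hu1 +
      (4*((x-e1)^2 - u1^2)*((x-e3)^2 - (e3-e1)*(e3-e2)))*hu2 +
      (4*((x-e1)^2 - u1^2)*((x-e2)^2 - u2^2))*hu3
  have h4 : (4 : LLlattes) ≠ 0 := by norm_num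
  have hcard : Multiset.card M = 6 := by rw [hM]; rfl
  have hndW : W.natDegree = 6 := by
    rw [← natDegree_map (p := W) φ, hmap, natDegree_C_mul h4,
      natDegree_multiset_prod_X_sub_C_eq_card, hcard]
  have hmon : ((M.map (fun r => X - C r)).prod).Monic :=
    monic_multiset_prod_of_monic _ _ (fun r _ => monic_X_sub_C r)
  have hlc : φ W.leadingCoeff = 4 := by
    rw [← leadingCoeff_map φ, hmap, leadingCoeff_mul, leadingCoeff_C, hmon.leadingCoeff, mul_one]
  have hroots : (W.map φ).roots = M := by
    rw [hmap, roots_C_mul _ h4, roots_multiset_prod_X_sub_C]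
  rw [polyDisc, ← hφdef, hlc, hndW, hroots, hM]
  have hkey := key (φ a) (φ b) (φ c) e1 e2 e3 u1 u2 u3 ha' hb' hc' hu1 hu2 hu3
  rw [show 2*6-2 = 10 from rfl]
  rw [hkey]
  simp only [map_mul, map_neg, map_pow, map_add, map_sub, map_ofNat]

/-- Over `ℚ[a,b,c]` (viewed inside its fraction field, with `a, b, c` the three
indeterminates), let `f = x³ + ax² + bx + c`, `A = x⁴ − 2bx² − 8cx + b² − 4ac`,
`B = 4x³ + 4ax² + 4bx + 4c`, and `W = B·A' − A·B'`.  Then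
`disc(W) = −2³⁸ · disc(f)⁵`, where `disc(f) = a²b² + 18abc − 4a³c − 4b³ − 27c²`. -/
theorem lattes_disc_identity
    (a b c : FractionRing (MvPolynomial (Fin 3) ℚ))
    (ha : a = algebraMap (MvPolynomial (Fin 3) ℚ) _ (MvPolynomial.X 0))
    (hb : b = algebraMap (MvPolynomial (Fin 3) ℚ) _ (MvPolynomial.X 1))
    (hc : c = algebraMap (MvPolynomial (Fin 3) ℚ) _ (MvPolynomial.X 2))
    (A B W : Polynomial (FractionRing (MvPolynomial (Fin 3) ℚ)))
    (hA : A = X ^ 4 - C (2 * b) * X ^ 2 - C (8 * c) * X + C (b ^ 2 - 4 * a * c))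
    (hB : B = C 4 * X ^ 3 + C (4 * a) * X ^ 2 + C (4 * b) * X + C (4 * c))
    (hW : W = B * derivative A - A * derivative B) :
    polyDisc W
      = algebraMap _ (AlgebraicClosure (FractionRing (MvPolynomial (Fin 3) ℚ)))
          (-(2 ^ 38) *
            (a ^ 2 * b ^ 2 + 18 * a * b * c - 4 * a ^ 3 * c - 4 * b ^ 3 - 27 * c ^ 2) ^ 5) := by
  exact lattes_aux a b c A B W hA hB hW
end
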